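/- Let T be a d×d complex matrix with 0 in the interior of the numerical range W(T), let X be an m×m complex matrix, and fix n ∈ ℕ. Then the following are equivalent: (1) for all n×n complex matrices A and B with A positive semidefinite, if A ⊗ I_d + B ⊗ T + Bᴴ ⊗ Tᴴ is positive semidefinite then A ⊗ I_m + B ⊗ X + Bᴴ ⊗ Xᴴ is positive semidefinite; (2) for all n×n complex matrices B, if I_n ⊗ I_d + B ⊗ T + Bᴴ ⊗ Tᴴ is positive semidefinite then I_n ⊗ I_m + B ⊗ X + Bᴴ ⊗ Xᴴ is positive semidefinite. -/

import Mathlib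

open Matrix Kronecker
open scoped ComplexOrder

/-- The numerical range of a complex matrix: `{ xᴴ A x : ‖x‖ = 1 }`. -/
def numericalRange {d : ℕ} (A : Matrix (Fin d) (Fin d) ℂ) : Set ℂ :=
  {z : ℂ | ∃ x : Fin d → ℂ, star x ⬝ᵥ x = 1 ∧ star x ⬝ᵥ (A *ᵥ x) = z}

private lemma conjTranspose_kron {a b : ℕ} (A : Matrix (Fin a) (Fin a) ℂ)
    (B : Matrix (Fin b) (Fin b) ℂ) : (A ⊗ₖ B)ᴴ = Aᴴ ⊗ₖ Bᴴ := by
  ext ⟨i, j⟩ ⟨k, l⟩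
  simp [conjTranspose_apply, kroneckerMap_apply]

private lemma kron_conj {k : ℕ} (E P : Matrix (Fin k) (Fin k) ℂ) {c : ℕ}
    (Q : Matrix (Fin c) (Fin c) ℂ) :
    (E ⊗ₖ (1 : Matrix (Fin c) (Fin c) ℂ)) * (P ⊗ₖ Q) * (E ⊗ₖ 1) = (E * P * E) ⊗ₖ Q := by
  rw [← mul_kronecker_mul, ← mul_kronecker_mul, Matrix.one_mul, Matrix.mul_one]

theorem nPositivity_iff {d m n : ℕ} (T : Matrix (Fin d) (Fin d) ℂ)
    (hT : (0 : ℂ) ∈ interior (numericalRange T))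
    (X : Matrix (Fin m) (Fin m) ℂ) :
    (∀ A B : Matrix (Fin n) (Fin n) ℂ, A.PosSemidef →
        (A ⊗ₖ (1 : Matrix (Fin d) (Fin d) ℂ) + B ⊗ₖ T + Bᴴ ⊗ₖ Tᴴ).PosSemidef →
        (A ⊗ₖ (1 : Matrix (Fin m) (Fin m) ℂ) + B ⊗ₖ X + Bᴴ ⊗ₖ Xᴴ).PosSemidef) ↔
      (∀ B : Matrix (Fin n) (Fin n) ℂ,
        ((1 : Matrix (Fin n) (Fin n) ℂ) ⊗ₖ (1 : Matrix (Fin d) (Fin d) ℂ)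
            + B ⊗ₖ T + Bᴴ ⊗ₖ Tᴴ).PosSemidef →
        ((1 : Matrix (Fin n) (Fin n) ℂ) ⊗ₖ (1 : Matrix (Fin m) (Fin m) ℂ)
            + B ⊗ₖ X + Bᴴ ⊗ₖ Xᴴ).PosSemidef) := by
  constructor
  · intro h B hB
    exact h 1 B .one hB
  · intro h A B hA hpos
    -- Step 1: the positive-definite case, by conjugating with the square root.
    have key : ∀ A B : Matrix (Fin n) (Fin n) ℂ, A.PosDef →
        (A ⊗ₖ (1 : Matrix (Fin d) (Fin d) ℂ) + B ⊗ₖ T + Bᴴ ⊗ₖ Tᴴ).PosSemidef →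
        (A ⊗ₖ (1 : Matrix (Fin m) (Fin m) ℂ) + B ⊗ₖ X + Bᴴ ⊗ₖ Xᴴ).PosSemidef := by
      intro A B hA hpos
      obtain ⟨C, hCH, hCC⟩ : ∃ C : Matrix (Fin n) (Fin n) ℂ, Cᴴ = C ∧ C * C = A := by
        open scoped MatrixOrder in
        exact ⟨CFC.sqrt A, (CFC.sqrt_nonneg A).posSemidef.1,
          CFC.sqrt_mul_sqrt_self A hA.posSemidef.nonneg⟩
      have hdet : IsUnit C.det := by
        rw [isUnit_iff_ne_zero]
        intro h0
        have : A.det = 0 := by rw [← hCC, det_mul, h0, zero_mul]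
        exact hA.det_pos.ne' this
      have hinv : C * C⁻¹ = 1 := mul_nonsing_inv _ hdet
      have hinv' : C⁻¹ * C = 1 := nonsing_inv_mul _ hdet
      have hiH : (C⁻¹)ᴴ = C⁻¹ := by rw [conjTranspose_nonsing_inv, hCH]
      set B' := C⁻¹ * B * C⁻¹ with hB'def
      have hB'H : B'ᴴ = C⁻¹ * Bᴴ * C⁻¹ := by
        rw [hB'def, conjTranspose_mul, conjTranspose_mul, hiH, Matrix.mul_assoc]
      have hcan : ∀ Y : Matrix (Fin n) (Fin n) ℂ, C * (C⁻¹ * Y * C⁻¹) * C = Y := by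
        intro Y
        calc C * (C⁻¹ * Y * C⁻¹) * C = (C * C⁻¹) * Y * (C⁻¹ * C) := by noncomm_ring
        _ = Y := by rw [hinv, hinv', Matrix.one_mul, Matrix.mul_one]
      have hid : C⁻¹ * A * C⁻¹ = 1 := by
        rw [← hCC, ← Matrix.mul_assoc, hinv', Matrix.one_mul, hinv]
      have hNH : (C⁻¹ ⊗ₖ (1 : Matrix (Fin d) (Fin d) ℂ))ᴴ = C⁻¹ ⊗ₖ 1 := by
        rw [conjTranspose_kron, hiH, conjTranspose_one]
      have h2 := hpos.conjTranspose_mul_mul_same (C⁻¹ ⊗ₖ (1 : Matrix (Fin d) (Fin d) ℂ))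
      rw [hNH] at h2
      have e1 : (C⁻¹ ⊗ₖ (1 : Matrix (Fin d) (Fin d) ℂ))
            * (A ⊗ₖ (1 : Matrix (Fin d) (Fin d) ℂ) + B ⊗ₖ T + Bᴴ ⊗ₖ Tᴴ)
            * (C⁻¹ ⊗ₖ 1)
          = (1 : Matrix (Fin n) (Fin n) ℂ) ⊗ₖ (1 : Matrix (Fin d) (Fin d) ℂ)
            + B' ⊗ₖ T + B'ᴴ ⊗ₖ Tᴴ := by
        rw [hB'H]
        simp only [Matrix.add_mul, Matrix.mul_add, kron_conj, hid, hB'def, hB'H]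
      rw [e1] at h2
      have h3 := h B' h2
      have hMH : (C ⊗ₖ (1 : Matrix (Fin m) (Fin m) ℂ))ᴴ = C ⊗ₖ 1 := by
        rw [conjTranspose_kron, hCH, conjTranspose_one]
      have h4 := h3.conjTranspose_mul_mul_same (C ⊗ₖ (1 : Matrix (Fin m) (Fin m) ℂ))
      rw [hMH] at h4
      have e2 : (C ⊗ₖ (1 : Matrix (Fin m) (Fin m) ℂ))
            * ((1 : Matrix (Fin n) (Fin n) ℂ) ⊗ₖ (1 : Matrix (Fin m) (Fin m) ℂ)
              + B' ⊗ₖ X + B'ᴴ ⊗ₖ Xᴴ)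
            * (C ⊗ₖ 1)
          = A ⊗ₖ (1 : Matrix (Fin m) (Fin m) ℂ) + B ⊗ₖ X + Bᴴ ⊗ₖ Xᴴ := by
        rw [hB'H]
        simp only [Matrix.add_mul, Matrix.mul_add, kron_conj, hB'def, hB'H, hcan]
        rw [Matrix.mul_one, hCC]
      rw [e2] at h4
      exact h4
    -- Step 2: the general case, by perturbation.
    have heps : ∀ ε : ℝ, 0 < ε →
        ((A + (ε : ℂ) • 1) ⊗ₖ (1 : Matrix (Fin m) (Fin m) ℂ)
          + B ⊗ₖ X + Bᴴ ⊗ₖ Xᴴ).PosSemidef := by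
      intro ε hε
      have hd : ((ε : ℂ) • (1 : Matrix (Fin n) (Fin n) ℂ)).PosDef := by
        rw [smul_one_eq_diagonal]
        exact posDef_diagonal_iff.mpr fun i => by positivity
      have hAeps : (A + (ε : ℂ) • 1).PosDef := Matrix.PosDef.posSemidef_add hA hd
      apply key _ B hAeps
      have hd' : ((ε : ℂ) • ((1 : Matrix (Fin n) (Fin n) ℂ)
          ⊗ₖ (1 : Matrix (Fin d) (Fin d) ℂ))).PosSemidef := by
        rw [one_kronecker_one, smul_one_eq_diagonal]
        exact PosSemidef.diagonal fun i => by positivity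
      have := hpos.add hd'
      convert this using 1
      rw [add_kronecker, smul_kronecker]
      abel
    rw [posSemidef_iff_dotProduct_mulVec]
    constructor
    · -- Hermitian
      have hB1 : (A ⊗ₖ (1 : Matrix (Fin m) (Fin m) ℂ) + B ⊗ₖ X + Bᴴ ⊗ₖ Xᴴ)ᴴ
          = A ⊗ₖ (1 : Matrix (Fin m) (Fin m) ℂ) + Bᴴ ⊗ₖ Xᴴ + B ⊗ₖ X := by
        simp only [conjTranspose_add, conjTranspose_kron, conjTranspose_one,
          conjTranspose_conjTranspose, hA.1.eq]
      rw [Matrix.IsHermitian, hB1]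
      abel
    · intro x
      set z := star x ⬝ᵥ ((A ⊗ₖ (1 : Matrix (Fin m) (Fin m) ℂ) + B ⊗ₖ X + Bᴴ ⊗ₖ Xᴴ) *ᵥ x)
        with hz
      set s := star x ⬝ᵥ x with hs
      have hs0 : 0 ≤ s := by
        have := (Matrix.PosSemidef.one (n := Fin n × Fin m) (R := ℂ)).dotProduct_mulVec_nonneg x
        rwa [one_mulVec] at this
      have hkey : ∀ ε : ℝ, 0 < ε → 0 ≤ z + (ε : ℂ) * s := by
        intro ε hε
        have h5 := (heps ε hε).dotProduct_mulVec_nonneg x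
        have expand : (A + (ε : ℂ) • 1) ⊗ₖ (1 : Matrix (Fin m) (Fin m) ℂ)
              + B ⊗ₖ X + Bᴴ ⊗ₖ Xᴴ
            = (A ⊗ₖ (1 : Matrix (Fin m) (Fin m) ℂ) + B ⊗ₖ X + Bᴴ ⊗ₖ Xᴴ)
              + (ε : ℂ) • ((1 : Matrix (Fin n) (Fin n) ℂ)
                ⊗ₖ (1 : Matrix (Fin m) (Fin m) ℂ)) := by
          rw [add_kronecker, smul_kronecker]
          abel
        rw [expand, one_kronecker_one, add_mulVec, dotProduct_add, smul_mulVec,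
          one_mulVec, dotProduct_smul] at h5
        simpa [smul_eq_mul] using h5
      have hsim : s.im = 0 := ((Complex.le_def).1 hs0).2.symm
      have hsre : 0 ≤ s.re := ((Complex.le_def).1 hs0).1
      have hre : ∀ ε : ℝ, 0 < ε → 0 ≤ z.re + ε * s.re := by
        intro ε hε
        have h6 := (Complex.le_def.1 (hkey ε hε)).1
        simpa [Complex.add_re, Complex.mul_re, hsim] using h6
      rw [Complex.le_def]
      constructor
      · -- real part
        simp only [Complex.zero_re]
        by_contra hlt
        push_neg at hlt
        rcases eq_or_lt_of_le hsre with hs0' | hs0'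
        · have h7 := hre 1 one_pos
          rw [← hs0'] at h7
          simp at h7
          linarith
        · have hzre : 0 < -z.re := by linarith
          have hε : 0 < -z.re / (2 * s.re) := by positivity
          have h7 := hre _ hε
          have h8 : z.re + -z.re / (2 * s.re) * s.re = z.re / 2 := by
            field_simp
            ring
          rw [h8] at h7
          linarith
      · -- imaginary part
        have h6 := (Complex.le_def.1 (hkey 1 one_pos)).2
        simp only [Complex.add_im, Complex.mul_im, Complex.ofReal_re, Complex.ofReal_im,
          hsim, Complex.zero_im] at h6 ⊢
        linarith [h6]
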